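/- For every integer w ≥ 3, the series ∑_{n=1}^∞ 1/((n − 2/w)(n − 1/w)(n + 1/w)(n + 2/w)) converges and equals (w³/24)·(π·(4·cot(π/w) − 2·cot(2π/w)) − 3w). -/

import Mathlib

open Real MeasureTheory

private lemma aux_exp1 (z : ℂ) :
    Complex.exp (-(z*Complex.I)) * (Complex.exp (2*z*Complex.I) - 1)
      = 2*Complex.I*Complex.sin z := by
  rw [Complex.sin, mul_sub, ← Complex.exp_add, mul_one]
  rw [show -(z*Complex.I) + 2*z*Complex.I = z*Complex.I by ring,
    show -z*Complex.I = -(z*Complex.I) by ring]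
  linear_combination (Complex.exp (z*Complex.I) - Complex.exp (-(z*Complex.I))) * Complex.I_sq

private lemma aux_exp2 (z : ℂ) :
    Complex.exp (z*Complex.I) * (Complex.exp (-(2*z*Complex.I)) - 1)
      = -(2*Complex.I*Complex.sin z) := by
  rw [Complex.sin, mul_sub, ← Complex.exp_add, mul_one]
  rw [show z*Complex.I + -(2*z*Complex.I) = -(z*Complex.I) by ring,
    show -z*Complex.I = -(z*Complex.I) by ring]
  linear_combination (Complex.exp (-(z*Complex.I)) - Complex.exp (z*Complex.I)) * Complex.I_sq

private lemma cot_series (c : ℝ) (hc0 : 0 < c) (hc1 : c < 1) :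
    HasSum (fun n : ℕ => 1 / (((n : ℝ) + 1) ^ 2 - c ^ 2))
      ((1 - π * c * Real.cot (π * c)) / (2 * c ^ 2)) := by
  haveI : Fact ((0:ℝ) < 1) := ⟨one_pos⟩
  set g : ℝ → ℂ := fun x => ((Real.cos (2 * π * c * (x - 1/2)) : ℝ) : ℂ) with hgdef
  have hg01 : g 0 = g 1 := by
    simp only [hgdef]
    rw [show 2 * π * c * ((0:ℝ) - 1/2) = -(2 * π * c * ((1:ℝ) - 1/2)) by ring, Real.cos_neg]
  have hgcont : Continuous g := by
    apply Complex.continuous_ofReal.comp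
    exact Real.continuous_cos.comp (by continuity)
  set F : C(AddCircle (1:ℝ), ℂ) :=
    ⟨AddCircle.liftIco 1 0 g, AddCircle.liftIco_zero_continuous hg01 hgcont.continuousOn⟩ with hFdef
  -- nonzero facts
  have hπ : (π : ℝ) ≠ 0 := Real.pi_ne_zero
  have hsin : Real.sin (π * c) ≠ 0 := by
    apply ne_of_gt
    apply Real.sin_pos_of_pos_of_lt_pi (by positivity)
    have := Real.pi_pos
    nlinarith
  have hcne : ∀ n : ℤ, c - (n : ℝ) ≠ 0 := by
    intro n
    rcases le_or_gt (n : ℝ) 0 with h | h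
    · exact ne_of_gt (by linarith)
    · have : (1 : ℝ) ≤ (n : ℝ) := by exact_mod_cast (by exact_mod_cast h : (0:ℤ) < n)
      exact ne_of_lt (by linarith)
  have hcne' : ∀ n : ℤ, c + (n : ℝ) ≠ 0 := by
    intro n
    have := hcne (-n)
    push_cast at this
    intro h; exact this (by linarith)
  -- Fourier coefficients
  have hcoef : ∀ n : ℤ,
      fourierCoeff (⇑F) n = ((Real.sin (π*c) * c / π / (c^2 - (n:ℝ)^2) : ℝ) : ℂ) := by
    intro n
    have hF : (⇑F) = AddCircle.liftIco 1 0 g := rfl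
    rw [hF, fourierCoeff_liftIco_eq, fourierCoeffOn_eq_integral]
    simp only [zero_add, sub_zero, fourier_coe_apply, Complex.ofReal_one, div_one, one_smul,
      smul_eq_mul]
    have hπC : (π : ℂ) ≠ 0 := Complex.ofReal_ne_zero.mpr hπ
    have hmC : ((c:ℂ) - (n:ℂ)) ≠ 0 := by
      have : ((c - (n:ℝ) : ℝ) : ℂ) ≠ 0 := Complex.ofReal_ne_zero.mpr (hcne n)
      push_cast at this; exact this
    have hpC : ((c:ℂ) + (n:ℂ)) ≠ 0 := by
      have : ((c + (n:ℝ) : ℝ) : ℂ) ≠ 0 := Complex.ofReal_ne_zero.mpr (hcne' n)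
      push_cast at this; exact this
    have hA : (2*(π:ℂ)*Complex.I*((c:ℂ)-(n:ℂ))) ≠ 0 := by
      apply mul_ne_zero (mul_ne_zero (mul_ne_zero two_ne_zero hπC) Complex.I_ne_zero) hmC
    have hB : (-(2*(π:ℂ)*Complex.I*((c:ℂ)+(n:ℂ)))) ≠ 0 := by
      simp only [neg_ne_zero]
      exact mul_ne_zero (mul_ne_zero (mul_ne_zero two_ne_zero hπC) Complex.I_ne_zero) hpC
    have key : ∀ x : ℝ, Complex.exp (2 * (π:ℂ) * Complex.I * ((-n : ℤ):ℂ) * (x:ℂ)) * g x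
        = Complex.exp (-(((π:ℂ)*(c:ℂ))*Complex.I))/2
            * Complex.exp ((2*(π:ℂ)*Complex.I*((c:ℂ)-(n:ℂ))) * (x:ℂ))
          + Complex.exp (((π:ℂ)*(c:ℂ))*Complex.I)/2
            * Complex.exp ((-(2*(π:ℂ)*Complex.I*((c:ℂ)+(n:ℂ)))) * (x:ℂ)) := by
      intro x
      simp only [hgdef]
      rw [Complex.ofReal_cos, Complex.cos]
      push_cast
      rw [← mul_div_assoc, mul_add, ← Complex.exp_add, ← Complex.exp_add,
        div_mul_eq_mul_div, div_mul_eq_mul_div, ← Complex.exp_add, ← Complex.exp_add, ← add_div]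
      congr 2
      · congr 1; ring
      · congr 1; ring
    rw [intervalIntegral.integral_congr (g :=
        fun x : ℝ => Complex.exp (-(((π:ℂ)*(c:ℂ))*Complex.I))/2
            * Complex.exp ((2*(π:ℂ)*Complex.I*((c:ℂ)-(n:ℂ))) * (x:ℂ))
          + Complex.exp (((π:ℂ)*(c:ℂ))*Complex.I)/2
            * Complex.exp ((-(2*(π:ℂ)*Complex.I*((c:ℂ)+(n:ℂ)))) * (x:ℂ)))
      (fun x _ => key x)]
    rw [intervalIntegral.integral_add
        (Continuous.intervalIntegrable (by fun_prop) 0 1)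
        (Continuous.intervalIntegrable (by fun_prop) 0 1),
      intervalIntegral.integral_const_mul, intervalIntegral.integral_const_mul,
      integral_exp_mul_complex hA, integral_exp_mul_complex hB]
    simp only [Complex.ofReal_one, Complex.ofReal_zero, mul_one, mul_zero, Complex.exp_zero]
    have hA1 : Complex.exp (2*(π:ℂ)*Complex.I*((c:ℂ)-(n:ℂ)))
        = Complex.exp (2*((π:ℂ)*(c:ℂ))*Complex.I) := by
      rw [show 2*(π:ℂ)*Complex.I*((c:ℂ)-(n:ℂ))
          = 2*((π:ℂ)*(c:ℂ))*Complex.I + (-n : ℤ)*(2*(π:ℂ)*Complex.I) by push_cast; ring,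
        Complex.exp_add, Complex.exp_int_mul_two_pi_mul_I, mul_one]
    have hB1 : Complex.exp (-(2*(π:ℂ)*Complex.I*((c:ℂ)+(n:ℂ))))
        = Complex.exp (-(2*((π:ℂ)*(c:ℂ))*Complex.I)) := by
      rw [show -(2*(π:ℂ)*Complex.I*((c:ℂ)+(n:ℂ)))
          = -(2*((π:ℂ)*(c:ℂ))*Complex.I) + (-n : ℤ)*(2*(π:ℂ)*Complex.I) by push_cast; ring,
        Complex.exp_add, Complex.exp_int_mul_two_pi_mul_I, mul_one]
    rw [hA1, hB1]
    have t1 : Complex.exp (-(((π:ℂ)*(c:ℂ))*Complex.I))/2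
        * ((Complex.exp (2*((π:ℂ)*(c:ℂ))*Complex.I) - 1)/(2*(π:ℂ)*Complex.I*((c:ℂ)-(n:ℂ))))
        = Complex.sin ((π:ℂ)*(c:ℂ)) / (2*(π:ℂ)*((c:ℂ)-(n:ℂ))) := by
      rw [div_mul_div_comm, aux_exp1, div_eq_div_iff (mul_ne_zero two_ne_zero hA) (by
        exact mul_ne_zero (mul_ne_zero two_ne_zero hπC) hmC)]
      ring
    have t2 : Complex.exp (((π:ℂ)*(c:ℂ))*Complex.I)/2
        * ((Complex.exp (-(2*((π:ℂ)*(c:ℂ))*Complex.I)) - 1)/(-(2*(π:ℂ)*Complex.I*((c:ℂ)+(n:ℂ)))))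
        = Complex.sin ((π:ℂ)*(c:ℂ)) / (2*(π:ℂ)*((c:ℂ)+(n:ℂ))) := by
      rw [div_mul_div_comm, aux_exp2, div_eq_div_iff (mul_ne_zero two_ne_zero hB) (by
        exact mul_ne_zero (mul_ne_zero two_ne_zero hπC) hpC)]
      ring
    rw [t1, t2]
    rw [show ((Real.sin (π*c) * c / π / (c^2 - (n:ℝ)^2) : ℝ) : ℂ)
        = Complex.sin ((π:ℂ)*(c:ℂ)) * (c:ℂ) / (π:ℂ) / (((c:ℂ))^2 - ((n:ℂ))^2) by
      push_cast [Complex.ofReal_sin]; ring]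
    have hsq : ((c:ℂ))^2 - ((n:ℂ))^2 ≠ 0 := by
      rw [show ((c:ℂ))^2 - ((n:ℂ))^2 = ((c:ℂ)-(n:ℂ))*((c:ℂ)+(n:ℂ)) by ring]
      exact mul_ne_zero hmC hpC
    field_simp
    ring
  -- summability
  have hc2 : (0:ℝ) < 1 - c^2 := by nlinarith
  have hKne : Real.sin (π*c) * c / π ≠ 0 :=
    div_ne_zero (mul_ne_zero hsin (ne_of_gt hc0)) hπ
  have base : Summable (fun n : ℕ => Real.sin (π*c) * c / π / (c^2 - ((n:ℝ))^2)) := by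
    apply (summable_nat_add_iff 1).1
    apply Summable.of_norm_bounded (g :=
      fun n : ℕ => (|Real.sin (π*c) * c / π| / (1 - c^2)) * (1/((n:ℝ)+1)^2))
    · apply Summable.mul_left
      have h2 := (summable_nat_add_iff (f := fun n : ℕ => 1/((n:ℝ))^2) 1).2
        (summable_one_div_nat_pow.mpr one_lt_two)
      refine h2.congr fun n => ?_
      push_cast
      ring
    · intro n
      have hn1 : (1:ℝ) ≤ ((n:ℝ)+1) := by
        have : (0:ℝ) ≤ (n:ℝ) := Nat.cast_nonneg n
        linarith
      have h1 : (0:ℝ) < ((n:ℝ)+1)^2 - c^2 := by nlinarith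
      have hsq1 : (1:ℝ) ≤ ((n:ℝ)+1)^2 := by nlinarith
      have hc2' : c^2 * 1 ≤ c^2 * ((n:ℝ)+1)^2 :=
        mul_le_mul_of_nonneg_left hsq1 (sq_nonneg c)
      have habs : |c^2 - ((n:ℝ)+1)^2| = ((n:ℝ)+1)^2 - c^2 := by
        rw [abs_of_neg (by linarith), neg_sub]
      rw [Real.norm_eq_abs, abs_div]
      push_cast
      rw [habs, show (|Real.sin (π*c) * c / π| / (1 - c^2)) * (1/((n:ℝ)+1)^2)
          = |Real.sin (π*c) * c / π| / ((1-c^2) * ((n:ℝ)+1)^2) by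
        rw [div_mul_div_comm, mul_one]]
      exact div_le_div_of_nonneg_left (abs_nonneg _) (by positivity) (by nlinarith [hc2'])
  have hsumZ : Summable (fun n : ℤ => Real.sin (π*c) * c / π / (c^2 - (n:ℝ)^2)) := by
    refine Summable.of_nat_of_neg (base.congr fun n => ?_) (base.congr fun n => ?_) <;>
      · push_cast
        ring_nf
  have hsumC : Summable (fourierCoeff (⇑F)) :=
    (summable_congr hcoef).2 (Complex.summable_ofReal.mpr hsumZ)
  have hpt := has_pointwise_sum_fourier_series_of_summable hsumC (0 : AddCircle (1:ℝ))
  simp only [fourier_eval_zero, smul_eq_mul, mul_one] at hpt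
  simp_rw [hcoef] at hpt
  have hF0 : F (0 : AddCircle (1:ℝ)) = ((Real.cos (π*c) : ℝ) : ℂ) := by
    show AddCircle.liftIco 1 0 g ((0 : AddCircle (1:ℝ))) = _
    rw [← QuotientAddGroup.mk_zero, AddCircle.liftIco_coe_apply (by norm_num)]
    simp only [hgdef]
    rw [show 2*π*c*((0:ℝ)-1/2) = -(π*c) by ring, Real.cos_neg]
  rw [hF0] at hpt
  have hreal : HasSum (fun n : ℤ => Real.sin (π*c) * c / π / (c^2 - (n:ℝ)^2))
      (Real.cos (π*c)) := Complex.hasSum_ofReal.mp hpt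
  have hq : ∀ X : ℝ, Real.sin (π*c) * c / π / X / (Real.sin (π*c) * c / π) = 1/X := by
    intro X
    rw [div_div, mul_comm X, div_mul_cancel_left₀ hKne, one_div]
  have h2 : HasSum (fun n : ℤ => 1/(c^2 - (n:ℝ)^2))
      (Real.cos (π*c) / (Real.sin (π*c) * c / π)) := by
    have := hreal.div_const (Real.sin (π*c) * c / π)
    simpa only [hq] using this
  have h3 := h2.nat_add_neg
  simp only [Int.cast_natCast, Int.cast_neg, neg_sq, Int.cast_zero, ne_eq,
    OfNat.ofNat_ne_zero, not_false_eq_true, zero_pow, sub_zero] at h3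
  have h4 : HasSum (fun n : ℕ => 1/(c^2-((n+1:ℕ):ℝ)^2) + 1/(c^2-((n+1:ℕ):ℝ)^2))
      (Real.cos (π*c) / (Real.sin (π*c) * c / π) - 1/c^2) := by
    refine (hasSum_nat_add_iff (f := fun n : ℕ => 1/(c^2-(n:ℝ)^2) + 1/(c^2-(n:ℝ)^2)) 1).2 ?_
    convert h3 using 1
    · rfl
    simp only [Finset.sum_range_one, Nat.cast_zero, ne_eq, OfNat.ofNat_ne_zero,
      not_false_eq_true, zero_pow, sub_zero]
    ring
  have h5 := h4.mul_left (-(1/2))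
  convert h5 using 1
  · rfl
  · funext n
    push_cast
    rw [show (((n:ℝ)+1))^2 - c^2 = -(c^2 - ((n:ℝ)+1)^2) by ring, div_neg]
    ring
  · rw [Real.cot_eq_cos_div_sin]
    field_simp
    ring

theorem zeta4_closed_form (w : ℤ) (hw : 3 ≤ w) :
    HasSum (fun n : ℕ =>
        1 / ((((n : ℝ) + 1) - 2 / w) * (((n : ℝ) + 1) - 1 / w) *
          (((n : ℝ) + 1) + 1 / w) * (((n : ℝ) + 1) + 2 / w)))
      (((w : ℝ) ^ 3 / 24) *
        (π * (4 * Real.cot (π / w) - 2 * Real.cot (2 * π / w)) - 3 * w)) := by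
  have hw3 : (3:ℝ) ≤ (w:ℝ) := by exact_mod_cast hw
  have hwpos : (0:ℝ) < (w:ℝ) := by linarith
  have hw0 : (w:ℝ) ≠ 0 := ne_of_gt hwpos
  have ha := cot_series (2/(w:ℝ)) (div_pos two_pos hwpos) (by rw [div_lt_one hwpos]; linarith)
  have hb := cot_series (1/(w:ℝ)) (div_pos one_pos hwpos) (by rw [div_lt_one hwpos]; linarith)
  have h := (ha.sub hb).mul_left ((w:ℝ)^2/3)
  convert h using 1
  · rfl
  · funext n
    have hx1 : (1:ℝ) ≤ (n:ℝ)+1 := by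
      have := Nat.cast_nonneg (α := ℝ) n; linarith
    have ha2 : (2:ℝ)/w < 1 := by rw [div_lt_one hwpos]; linarith
    have hb2 : (1:ℝ)/w < 1 := by rw [div_lt_one hwpos]; linarith
    have ha0 : (0:ℝ) < 2/w := div_pos two_pos hwpos
    have hb0 : (0:ℝ) < 1/w := div_pos one_pos hwpos
    have h1 : ((n:ℝ)+1) - 2/w ≠ 0 := ne_of_gt (by linarith)
    have h2 : ((n:ℝ)+1) - 1/w ≠ 0 := ne_of_gt (by linarith)
    have h3 : ((n:ℝ)+1) + 1/w ≠ 0 := ne_of_gt (by linarith)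
    have h4 : ((n:ℝ)+1) + 2/w ≠ 0 := ne_of_gt (by linarith)
    have h5 : (((n:ℝ)+1))^2 - (2/(w:ℝ))^2 ≠ 0 := by
      rw [show (((n:ℝ)+1))^2 - (2/(w:ℝ))^2 = (((n:ℝ)+1) - 2/w) * (((n:ℝ)+1) + 2/w) by ring]
      exact mul_ne_zero h1 h4
    have h6 : (((n:ℝ)+1))^2 - (1/(w:ℝ))^2 ≠ 0 := by
      rw [show (((n:ℝ)+1))^2 - (1/(w:ℝ))^2 = (((n:ℝ)+1) - 1/w) * (((n:ℝ)+1) + 1/w) by ring]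
      exact mul_ne_zero h2 h3
    rw [div_sub_div _ _ h5 h6, div_mul_div_comm,
      div_eq_div_iff (mul_ne_zero (mul_ne_zero (mul_ne_zero h1 h2) h3) h4)
        (mul_ne_zero three_ne_zero (mul_ne_zero h5 h6))]
    field_simp
    ring
  · rw [show π * (2/(w:ℝ)) = 2*π/w by ring, show π * (1/(w:ℝ)) = π/w by ring]
    have hc2 : ((2:ℝ)/w)^2 = 4/w^2 := by ring
    field_simp
    ring
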